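/- Let S1 = S(γ^((q-1)/d1), 0, H1) and S2 = S(γ^((q-1)/d2), 0, H2) be subgroups of AGL(1,F_q), where d1 | d2 | q-1, H1 ⊆ H2, and both triples (γ^((q-1)/d1), 0, H1) and (γ^((q-1)/d2), 0, H2) lie in S. If H1 is NOT closed under multiplication by the subfield F_{p(d2)} of F_q, then μ(S1, S2) = 0. -/

import Mathlib

open Matrix
open scoped Classical

abbrev GL2 (F : Type) [Field F] := GL (Fin 2) F

/-- `AGL(1,F)`: the subgroup of `GL(2,F)` of matrices of the form `[[a,b],[0,1]]`. -/
def AGL (F : Type) [Field F] : Subgroup (GL2 F) where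
  carrier := {g | (g : Matrix (Fin 2) (Fin 2) F) 1 0 = 0 ∧
                  (g : Matrix (Fin 2) (Fin 2) F) 1 1 = 1}
  one_mem' := by
    constructor <;> simp [Matrix.one_apply]
  mul_mem' := by
    rintro a b ⟨ha0, ha1⟩ ⟨hb0, hb1⟩
    constructor <;>
      simp [Units.val_mul, Matrix.mul_apply, Fin.sum_univ_two, ha0, ha1, hb0, hb1]
  inv_mem' := by
    rintro g ⟨h0, h1⟩
    have hdet : ((g : Matrix (Fin 2) (Fin 2) F) 0 0) ≠ 0 := by
      have hu : IsUnit ((g : Matrix (Fin 2) (Fin 2) F).det) :=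
        (Matrix.isUnit_iff_isUnit_det _).1 g.isUnit
      rw [Matrix.det_fin_two, h0, h1] at hu
      simpa using hu.ne_zero
    have hinv : ((g⁻¹ : GL2 F) : Matrix (Fin 2) (Fin 2) F)
        = ((g : Matrix (Fin 2) (Fin 2) F))⁻¹ := Matrix.coe_units_inv g
    constructor <;>
      simp [hinv, Matrix.inv_def, Matrix.adjugate_fin_two, Matrix.det_fin_two,
        h0, h1, hdet]

/-- Membership of a triple `(a,b,H)` in the set `𝒮`: `a ∈ F*`, `H` is an additive
subgroup of `F` closed under multiplication by the subfield `F_p(a)` generated by `a`,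
and `b = 0` when `a = 1`. -/
def memS {F : Type} [Field F] (a b : F) (H : AddSubgroup F) : Prop :=
  a ≠ 0 ∧ (a = 1 → b = 0) ∧ ∀ x ∈ Subfield.closure {a}, ∀ h ∈ H, x * h ∈ H

/-- `S(a,b,H)`: the subgroup of `GL(2,F)` generated by the matrix `[[a,b],[0,1]]`
together with the matrices `[[1,h],[0,1]]`, `h ∈ H`. -/
def Sgrp {F : Type} [Field F] (a b : F) (H : AddSubgroup F) : Subgroup (GL2 F) :=
  Subgroup.closure {g : GL2 F |
    (g : Matrix (Fin 2) (Fin 2) F) = !![a, b; 0, 1] ∨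
    ∃ h ∈ H, (g : Matrix (Fin 2) (Fin 2) F) = !![1, h; 0, 1]}

/-- `pPow p d` is `p(d)`: the smallest (positive) power of `p` that is `≡ 1 (mod d)`. -/
noncomputable def pPow (p d : ℕ) : ℕ := sInf {m | (∃ k : ℕ, 1 ≤ k ∧ m = p ^ k) ∧ m % d = 1 % d}
namespace MuAux
variable {F : Type} [Field F]

/-- unipotent element as a unit -/
def umat (h : F) : GL2 F :=
  ⟨!![1, h; 0, 1], !![1, -h; 0, 1],
   by simp [Matrix.mul_fin_two, Matrix.one_fin_two],
   by simp [Matrix.mul_fin_two, Matrix.one_fin_two]⟩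

@[simp] lemma umat_val (h : F) : (umat h : Matrix (Fin 2) (Fin 2) F) = !![1, h; 0, 1] := rfl

lemma umat_mul (h₁ h₂ : F) : umat h₁ * umat h₂ = umat (h₁ + h₂) :=
  Units.ext (by simp [Units.val_mul, Matrix.mul_fin_two, add_comm])

lemma umat_zero : umat (0 : F) = 1 := Units.ext (by simp [Matrix.one_fin_two])

lemma umat_inv (h : F) : (umat h)⁻¹ = umat (-h) := by
  rw [eq_comm, eq_inv_iff_mul_eq_one, umat_mul]
  simp [umat_zero]

def dmat (a : Fˣ) : GL2 F :=
  ⟨!![(a : F), 0; 0, 1], !![((a⁻¹ : Fˣ) : F), 0; 0, 1],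
   by simp [Matrix.mul_fin_two, Matrix.one_fin_two],
   by simp [Matrix.mul_fin_two, Matrix.one_fin_two]⟩

@[simp] lemma dmat_val (a : Fˣ) :
    (dmat a : Matrix (Fin 2) (Fin 2) F) = !![(a : F), 0; 0, 1] := rfl

lemma dmat_mul (a b : Fˣ) : dmat a * dmat b = dmat (a * b) :=
  Units.ext (by simp [Units.val_mul, Matrix.mul_fin_two])

lemma dmat_pow (a : Fˣ) (k : ℕ) : dmat a ^ k = dmat (a ^ k) := by
  induction k with
  | zero => exact Units.ext (by simp [Matrix.one_fin_two])
  | succ n ih => rw [pow_succ, pow_succ, ih, dmat_mul]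

lemma umat_mem_AGL (h : F) : umat h ∈ AGL F := by
  constructor <;> simp

lemma mul00 {g h : GL2 F} (hh : h ∈ AGL F) :
    ((g * h : GL2 F) : Matrix (Fin 2) (Fin 2) F) 0 0
      = (g : Matrix (Fin 2) (Fin 2) F) 0 0 * (h : Matrix (Fin 2) (Fin 2) F) 0 0 := by
  simp [Units.val_mul, Matrix.mul_apply, Fin.sum_univ_two, hh.1]

lemma det00 {g : GL2 F} (hg : g ∈ AGL F) :
    (g : Matrix (Fin 2) (Fin 2) F).det = (g : Matrix (Fin 2) (Fin 2) F) 0 0 := by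
  rw [Matrix.det_fin_two, hg.1, hg.2]; ring

lemma entry00_ne_zero {g : GL2 F} (hg : g ∈ AGL F) :
    (g : Matrix (Fin 2) (Fin 2) F) 0 0 ≠ 0 := by
  have hu : IsUnit ((g : Matrix (Fin 2) (Fin 2) F).det) :=
    (Matrix.isUnit_iff_isUnit_det _).1 g.isUnit
  rw [det00 hg] at hu
  simpa using hu.ne_zero

lemma inv_val {g : GL2 F} (hg : g ∈ AGL F) :
    ((g⁻¹ : GL2 F) : Matrix (Fin 2) (Fin 2) F)
      = !![((g : Matrix (Fin 2) (Fin 2) F) 0 0)⁻¹,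
           -(((g : Matrix (Fin 2) (Fin 2) F) 0 0)⁻¹ * (g : Matrix (Fin 2) (Fin 2) F) 0 1);
           0, 1] := by
  have hinv : ((g⁻¹ : GL2 F) : Matrix (Fin 2) (Fin 2) F)
      = ((g : Matrix (Fin 2) (Fin 2) F))⁻¹ := Matrix.coe_units_inv g
  have hd := entry00_ne_zero hg
  rw [hinv, Matrix.inv_def, Matrix.adjugate_fin_two, det00 hg, hg.1, hg.2]
  ext i j
  fin_cases i <;> fin_cases j <;>
    simp [Matrix.smul_apply] <;> field_simp

lemma eta_AGL {g : GL2 F} (hg : g ∈ AGL F) :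
    (g : Matrix (Fin 2) (Fin 2) F)
      = !![(g : Matrix (Fin 2) (Fin 2) F) 0 0, (g : Matrix (Fin 2) (Fin 2) F) 0 1; 0, 1] := by
  conv_lhs => rw [Matrix.eta_fin_two (g : Matrix (Fin 2) (Fin 2) F)]
  rw [hg.1, hg.2]

lemma conj_umat {g : GL2 F} (hg : g ∈ AGL F) (h : F) :
    g * umat h * g⁻¹ = umat ((g : Matrix (Fin 2) (Fin 2) F) 0 0 * h) := by
  rw [mul_inv_eq_iff_eq_mul]
  apply Units.ext
  ext i j
  fin_cases i <;> fin_cases j <;>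
    simp [Units.val_mul, Matrix.mul_apply, Fin.sum_univ_two, hg.1, hg.2] <;> ring

end MuAux
namespace MuAux
variable {F : Type} [Field F]

/-- The subgroup of `AGL` with `00`-entry a power of `a` and `01`-entry in `H`. -/
def Wp (a : F) (N : ℕ) (hN : 0 < N) (haN : a ^ N = 1) (H : AddSubgroup F)
    (hH : ∀ j : ℕ, ∀ h ∈ H, a ^ j * h ∈ H) : Subgroup (GL2 F) where
  carrier := {g | g ∈ AGL F ∧ (∃ j : ℕ, (g : Matrix (Fin 2) (Fin 2) F) 0 0 = a ^ j) ∧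
    (g : Matrix (Fin 2) (Fin 2) F) 0 1 ∈ H}
  one_mem' := by
    refine ⟨(AGL F).one_mem, ⟨0, by simp [Matrix.one_apply]⟩, ?_⟩
    simpa [Matrix.one_apply] using H.zero_mem
  mul_mem' := by
    rintro g g' ⟨hg, ⟨j, hj⟩, hh⟩ ⟨hg', ⟨j', hj'⟩, hh'⟩
    refine ⟨(AGL F).mul_mem hg hg', ⟨j + j', ?_⟩, ?_⟩
    · rw [mul00 hg', hj, hj', pow_add]
    · have : ((g * g' : GL2 F) : Matrix (Fin 2) (Fin 2) F) 0 1
          = (g : Matrix (Fin 2) (Fin 2) F) 0 0 * (g' : Matrix (Fin 2) (Fin 2) F) 0 1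
            + (g : Matrix (Fin 2) (Fin 2) F) 0 1 := by
        simp [Units.val_mul, Matrix.mul_apply, Fin.sum_univ_two, hg'.2]
      rw [this, hj]
      exact H.add_mem (hH j _ hh') hh
  inv_mem' := by
    rintro g ⟨hg, ⟨j, hj⟩, hh⟩
    have hmul : a ^ j * a ^ (j * (N - 1)) = 1 := by
      rw [← pow_add]
      have hjN : j + j * (N - 1) = N * j := by
        cases N with
        | zero => omega
        | succ n => simp only [Nat.succ_sub_one]; ring
      rw [hjN, pow_mul, haN, one_pow]
    have h2 : a ^ (j * (N - 1)) = (a ^ j)⁻¹ :=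
      eq_inv_of_mul_eq_one_left (by rw [mul_comm]; exact hmul)
    refine ⟨(AGL F).inv_mem hg, ⟨j * (N - 1), ?_⟩, ?_⟩
    · rw [inv_val hg, hj]
      simp [h2]
    · rw [inv_val hg, hj]
      have h3 : -((a ^ j)⁻¹ * (g : Matrix (Fin 2) (Fin 2) F) 0 1)
          = a ^ (j * (N - 1)) * (-(g : Matrix (Fin 2) (Fin 2) F) 0 1) := by
        rw [h2]; ring
      have h4 : (!![(a ^ j)⁻¹, -((a ^ j)⁻¹ * (g : Matrix (Fin 2) (Fin 2) F) 0 1); 0, 1] :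
          Matrix (Fin 2) (Fin 2) F) 0 1
          = -((a ^ j)⁻¹ * (g : Matrix (Fin 2) (Fin 2) F) 0 1) := by simp
      rw [h4, h3]
      exact hH _ _ (H.neg_mem hh)

/-- The subgroup of AGL-elements whose `00`-entry is attained by some element of `M`. -/
def WA (M : Subgroup (GL2 F)) (hM : M ≤ AGL F) : Subgroup (GL2 F) where
  carrier := {g | g ∈ AGL F ∧ ∃ m ∈ M, (m : Matrix (Fin 2) (Fin 2) F) 0 0
      = (g : Matrix (Fin 2) (Fin 2) F) 0 0}
  one_mem' := ⟨(AGL F).one_mem, 1, M.one_mem, rfl⟩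
  mul_mem' := by
    rintro g g' ⟨hg, m, hm, hm0⟩ ⟨hg', m', hm', hm0'⟩
    refine ⟨(AGL F).mul_mem hg hg', m * m', M.mul_mem hm hm', ?_⟩
    rw [mul00 hg', mul00 (hM hm'), hm0, hm0']
  inv_mem' := by
    rintro g ⟨hg, m, hm, hm0⟩
    refine ⟨(AGL F).inv_mem hg, m⁻¹, M.inv_mem hm, ?_⟩
    rw [inv_val hg, inv_val (hM hm), hm0]
    simp

/-- The additive subgroup of translations contained in `M`. -/
def Hof (M : Subgroup (GL2 F)) : AddSubgroup F where
  carrier := {h | umat h ∈ M}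
  zero_mem' := by simp only [Set.mem_setOf_eq, umat_zero]; exact M.one_mem
  add_mem' := by
    intro h h' hh hh'
    have := M.mul_mem hh hh'
    rwa [umat_mul] at this
  neg_mem' := by
    intro h hh
    have := M.inv_mem hh
    rwa [umat_inv] at this

/-- The multiplier subring of an additive subgroup. -/
def Rof (A : AddSubgroup F) : Subring F where
  carrier := {x | ∀ h ∈ A, x * h ∈ A}
  one_mem' := by intro h hh; simpa using hh
  zero_mem' := by intro h hh; simpa using A.zero_mem
  mul_mem' := by intro x y hx hy h hh; rw [mul_assoc]; exact hx _ (hy _ hh)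
  add_mem' := by intro x y hx hy h hh; rw [add_mul]; exact A.add_mem (hx _ hh) (hy _ hh)
  neg_mem' := by intro x hx h hh; rw [neg_mul]; exact A.neg_mem (hx _ hh)

/-- The fixed subfield of the `k`-th Frobenius power. -/
def fixedSubfield (F : Type) [Field F] (p k : ℕ) [Fact p.Prime] [CharP F p] (hk : k ≠ 0) :
    Subfield F where
  carrier := {x | x ^ p ^ k = x}
  one_mem' := by simp
  zero_mem' := by
    simp only [Set.mem_setOf_eq]
    exact zero_pow (pow_ne_zero k (Fact.out : p.Prime).ne_zero)
  mul_mem' := by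
    intro a b ha hb
    simp only [Set.mem_setOf_eq] at *
    rw [mul_pow, ha, hb]
  add_mem' := by
    intro a b ha hb
    simp only [Set.mem_setOf_eq] at *
    rw [add_pow_char_pow, ha, hb]
  neg_mem' := by
    intro a ha
    simp only [Set.mem_setOf_eq] at *
    have h0 : ((0 : F) - a) ^ p ^ k = (0 : F) ^ p ^ k - a ^ p ^ k := sub_pow_char_pow ..
    rw [zero_sub, zero_pow (pow_ne_zero k (Fact.out : p.Prime).ne_zero), zero_sub, ha] at h0
    exact h0
  inv_mem' := by
    intro a ha
    simp only [Set.mem_setOf_eq] at *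
    rw [inv_pow, ha]

end MuAux
namespace MuAux

lemma mu_eq_zero {G : Type} [Group G] [Finite (Subgroup G)]
    (μ : Subgroup G → Subgroup G → ℤ)
    (hμ : ∀ K L : Subgroup G, K ≤ L →
      (∑ᶠ M ∈ {M : Subgroup G | K ≤ M ∧ M ≤ L}, μ K M) = if K = L then 1 else 0)
    (K L : Subgroup G) (hKL : K ≤ L) (t : G) (htL : t ∈ L) (htK : t ∉ K)
    (hfib : ∀ M : Subgroup G, K ≤ M → M ≤ L → Subgroup.closure (↑M ∪ {t}) = L → M = L) :
    μ K L = 0 := by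
  haveI : Fintype (Subgroup G) := Fintype.ofFinite _
  set c : Subgroup G → Subgroup G := fun M => Subgroup.closure (↑M ∪ {t}) with hc
  have hMc : ∀ M : Subgroup G, M ≤ c M := fun M x hx => Subgroup.subset_closure (Or.inl hx)
  have htc : ∀ M : Subgroup G, t ∈ c M := fun M => Subgroup.subset_closure (Or.inr rfl)
  have hcle : ∀ (M w : Subgroup G), M ≤ w → t ∈ w → c M ≤ w := by
    intro M w hMw htw
    apply (Subgroup.closure_le _).2
    rintro x (hx | hx)
    · exact hMw hx
    · simp only [Set.mem_singleton_iff] at hx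
      subst hx; exact htw
  have hsum : ∀ w : Subgroup G, K ≤ w →
      (∑ M ∈ Finset.univ.filter (fun M => K ≤ M ∧ M ≤ w), μ K M)
        = if K = w then 1 else 0 := by
    intro w hKw
    have h := hμ K w hKw
    rwa [show {M : Subgroup G | K ≤ M ∧ M ≤ w}
        = ↑(Finset.univ.filter (fun M => K ≤ M ∧ M ≤ w)) by ext M; simp,
      finsum_mem_coe_finset] at h
  set g : Subgroup G → ℤ := fun z =>
    ∑ M ∈ Finset.univ.filter (fun M => (K ≤ M ∧ M ≤ L) ∧ c M = z), μ K M with hg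
  have claimA : ∀ w : Subgroup G, K ≤ w → w ≤ L → t ∈ w →
      (∑ z ∈ Finset.univ.filter (fun z => (t ∈ z ∧ K ≤ z) ∧ z ≤ w), g z) = 0 := by
    intro w hKw hwL htw
    have hmaps : ∀ M ∈ Finset.univ.filter (fun M => K ≤ M ∧ M ≤ w),
        c M ∈ Finset.univ.filter (fun z => (t ∈ z ∧ K ≤ z) ∧ z ≤ w) := by
      intro M hM
      simp only [Finset.mem_filter, Finset.mem_univ, true_and] at hM ⊢
      exact ⟨⟨htc M, hM.1.trans (hMc M), ⟩, hcle M w hM.2 htw⟩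
    have key : (∑ z ∈ Finset.univ.filter (fun z => (t ∈ z ∧ K ≤ z) ∧ z ≤ w), g z)
        = ∑ M ∈ Finset.univ.filter (fun M => K ≤ M ∧ M ≤ w), μ K M := by
      rw [← Finset.sum_fiberwise_of_maps_to hmaps (fun M => μ K M)]
      apply Finset.sum_congr rfl
      intro z hz
      simp only [Finset.mem_filter, Finset.mem_univ, true_and] at hz
      apply Finset.sum_congr _ (fun _ _ => rfl)
      ext M
      simp only [Finset.mem_filter, Finset.mem_univ, true_and]
      constructor
      · rintro ⟨⟨hKM, hML⟩, hcM⟩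
        exact ⟨⟨hKM, le_trans (hMc M) (hcM ▸ hz.2)⟩, hcM⟩
      · rintro ⟨⟨hKM, hMw⟩, hcM⟩
        exact ⟨⟨hKM, hMw.trans hwL⟩, hcM⟩
    rw [key, hsum w hKw, if_neg]
    intro h
    exact htK (h ▸ htw)
  have claimB : ∀ n : ℕ, ∀ w : Subgroup G,
      (Finset.univ.filter (fun z => (t ∈ z ∧ K ≤ z) ∧ z < w)).card ≤ n →
      K ≤ w → w ≤ L → t ∈ w → g w = 0 := by
    intro n
    induction n with
    | zero =>
      intro w hcard hKw hwL htw
      have hempty : Finset.univ.filter (fun z => (t ∈ z ∧ K ≤ z) ∧ z < w) = ∅ :=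
        Finset.card_eq_zero.1 (Nat.le_zero.1 hcard)
      have hfil : Finset.univ.filter (fun z => (t ∈ z ∧ K ≤ z) ∧ z ≤ w) = {w} := by
        ext z
        simp only [Finset.mem_filter, Finset.mem_univ, true_and, Finset.mem_singleton]
        constructor
        · rintro ⟨hz1, hz2⟩
          by_contra hne
          have : z ∈ Finset.univ.filter (fun z => (t ∈ z ∧ K ≤ z) ∧ z < w) := by
            simp only [Finset.mem_filter, Finset.mem_univ, true_and]
            exact ⟨hz1, lt_of_le_of_ne hz2 hne⟩
          rw [hempty] at this
          exact absurd this (Finset.notMem_empty z)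
        · rintro rfl
          exact ⟨⟨htw, hKw⟩, le_refl _⟩
      have := claimA w hKw hwL htw
      rwa [hfil, Finset.sum_singleton] at this
    | succ n ih =>
      intro w hcard hKw hwL htw
      have hsplit : Finset.univ.filter (fun z => (t ∈ z ∧ K ≤ z) ∧ z ≤ w)
          = insert w (Finset.univ.filter (fun z => (t ∈ z ∧ K ≤ z) ∧ z < w)) := by
        ext z
        simp only [Finset.mem_filter, Finset.mem_univ, true_and, Finset.mem_insert]
        constructor
        · rintro ⟨hz1, hz2⟩
          rcases eq_or_lt_of_le hz2 with h | h
          · exact Or.inl h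
          · exact Or.inr ⟨hz1, h⟩
        · rintro (rfl | ⟨hz1, hz2⟩)
          · exact ⟨⟨htw, hKw⟩, le_refl _⟩
          · exact ⟨hz1, le_of_lt hz2⟩
      have hwnot : w ∉ Finset.univ.filter (fun z => (t ∈ z ∧ K ≤ z) ∧ z < w) := by
        simp only [Finset.mem_filter, Finset.mem_univ, true_and]
        rintro ⟨-, h⟩
        exact lt_irrefl _ h
      have hA := claimA w hKw hwL htw
      rw [hsplit, Finset.sum_insert hwnot] at hA
      have hzero : (∑ z ∈ Finset.univ.filter (fun z => (t ∈ z ∧ K ≤ z) ∧ z < w), g z) = 0 := by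
        apply Finset.sum_eq_zero
        intro z hz
        simp only [Finset.mem_filter, Finset.mem_univ, true_and] at hz
        apply ih z _ hz.1.2 (hz.2.le.trans hwL) hz.1.1
        have hss : Finset.univ.filter (fun y => (t ∈ y ∧ K ≤ y) ∧ y < z)
            ⊂ Finset.univ.filter (fun y => (t ∈ y ∧ K ≤ y) ∧ y < w) := by
          refine ⟨?_, ?_⟩
          · intro y hy
            simp only [Finset.mem_filter, Finset.mem_univ, true_and] at hy ⊢
            exact ⟨hy.1, hy.2.trans hz.2⟩
          · intro hsub
            have : z ∈ Finset.univ.filter (fun y => (t ∈ y ∧ K ≤ y) ∧ y < z) := by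
              apply hsub
              simp only [Finset.mem_filter, Finset.mem_univ, true_and]
              exact hz
            simp only [Finset.mem_filter, Finset.mem_univ, true_and] at this
            exact lt_irrefl _ this.2
        have := Finset.card_lt_card hss
        omega
      rw [hzero, add_zero] at hA
      exact hA
  have hgL : g L = μ K L := by
    have hfil : Finset.univ.filter (fun M => (K ≤ M ∧ M ≤ L) ∧ c M = L) = {L} := by
      ext M
      simp only [Finset.mem_filter, Finset.mem_univ, true_and, Finset.mem_singleton]
      constructor
      · rintro ⟨⟨h1, h2⟩, h3⟩
        exact hfib M h1 h2 h3
      · rintro rfl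
        exact ⟨⟨hKL, le_refl _⟩, le_antisymm (hcle M M (le_refl _) htL) (hMc M)⟩
    rw [hg]
    simp only
    rw [hfil, Finset.sum_singleton]
  rw [← hgL]
  exact claimB (Finset.univ.card) L (Finset.card_le_card (Finset.filter_subset _ _) |>.trans
    (Finset.card_le_univ _)) hKL (le_refl _) htL

end MuAux
namespace MuAux
variable {F : Type} [Field F]

lemma mem_AGL_of_val {g : GL2 F} {a b : F}
    (hg : (g : Matrix (Fin 2) (Fin 2) F) = !![a, b; 0, 1]) : g ∈ AGL F := by
  constructor <;> rw [hg] <;> simp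

lemma Sgrp_le_AGL (a b : F) (H : AddSubgroup F) : Sgrp a b H ≤ AGL F := by
  rw [Sgrp, Subgroup.closure_le]
  rintro g (hg | ⟨h, hh, hg⟩)
  · exact mem_AGL_of_val hg
  · exact mem_AGL_of_val hg

lemma umat_mem_Sgrp {a b : F} {H : AddSubgroup F} {h : F} (hh : h ∈ H) :
    umat h ∈ Sgrp a b H :=
  Subgroup.subset_closure (Or.inr ⟨h, hh, rfl⟩)

lemma dmat_mem_Sgrp {a : F} (au : Fˣ) (ha : (au : F) = a) (H : AddSubgroup F) :
    dmat au ∈ Sgrp a 0 H :=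
  Subgroup.subset_closure (Or.inl (by rw [dmat_val, ha]))

lemma mem_H_of_umat_mem_Sgrp {a : F} {H : AddSubgroup F} {x : F}
    (N : ℕ) (hN : 0 < N) (haN : a ^ N = 1)
    (hH : ∀ j : ℕ, ∀ h ∈ H, a ^ j * h ∈ H)
    (hx : umat x ∈ Sgrp a 0 H) : x ∈ H := by
  have hle : Sgrp a 0 H ≤ Wp a N hN haN H hH := by
    rw [Sgrp, Subgroup.closure_le]
    rintro g (hg | ⟨h, hh, hg⟩)
    · refine ⟨mem_AGL_of_val hg, ⟨1, ?_⟩, ?_⟩ <;> rw [hg] <;> simp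
    · refine ⟨mem_AGL_of_val hg, ⟨0, ?_⟩, ?_⟩ <;> rw [hg] <;> simp
      exact hh
  have hmem := hle hx
  have : (umat x : Matrix (Fin 2) (Fin 2) F) 0 1 ∈ H := hmem.2.2
  simpa using this

end MuAux
open MuAux in
theorem stmt0 (F : Type) [Field F] [Fintype F] (p q : ℕ) (hp : p.Prime)
    (hchar : ringChar F = p) (hq : Fintype.card F = q)
    (γ : F) (hγ0 : γ ≠ 0) (hγ : ∀ x : F, x ≠ 0 → ∃ k : ℕ, x = γ ^ k)
    (d1 d2 : ℕ) (hd12 : d1 ∣ d2) (hd2 : d2 ∣ q - 1)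
    (H1 H2 : AddSubgroup F) (hH12 : H1 ≤ H2)
    (hS1 : memS (γ ^ ((q - 1) / d1)) 0 H1)
    (hS2 : memS (γ ^ ((q - 1) / d2)) 0 H2)
    (μ : Subgroup (GL2 F) → Subgroup (GL2 F) → ℤ)
    (hμ : ∀ K L : Subgroup (GL2 F), K ≤ L →
      (∑ᶠ M ∈ {M : Subgroup (GL2 F) | K ≤ M ∧ M ≤ L}, μ K M) = if K = L then 1 else 0)
    (hnot : ∃ K : Subfield F, Nat.card K = pPow p d2 ∧
      ¬ (∀ x ∈ K, ∀ h ∈ H1, x * h ∈ H1)) :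
    μ (Sgrp (γ ^ ((q - 1) / d1)) 0 H1) (Sgrp (γ ^ ((q - 1) / d2)) 0 H2) = 0 := by
  classical
  obtain ⟨K0, hK0card, hK0not⟩ := hnot
  push_neg at hK0not
  obtain ⟨x0, hx0K, h0, hh0, hx0h0⟩ := hK0not
  haveI : Fact p.Prime := ⟨hp⟩
  haveI hcharF : CharP F p := by rw [← hchar]; exact ringChar.charP F
  -- numerology
  have hq2 : 2 ≤ q := by rw [← hq]; exact Fintype.one_lt_card
  have hq1pos : 0 < q - 1 := by omega
  have hd2pos : 0 < d2 := Nat.pos_of_dvd_of_pos hd2 hq1pos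
  have hd1pos : 0 < d1 := Nat.pos_of_dvd_of_pos hd12 hd2pos
  set a2 : F := γ ^ ((q - 1) / d2) with ha2
  set a1 : F := γ ^ ((q - 1) / d1) with ha1
  have ha2ne : a2 ≠ 0 := pow_ne_zero _ hγ0
  have ha1ne : a1 ≠ 0 := pow_ne_zero _ hγ0
  set γu : Fˣ := Units.mk0 γ hγ0 with hγu
  set a2u : Fˣ := γu ^ ((q - 1) / d2) with ha2u
  have ha2uv : (a2u : F) = a2 := by rw [ha2u, Units.val_pow_eq_pow_val, hγu, Units.val_mk0]
  have hordγ : orderOf γu = q - 1 := by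
    have h1 : Subgroup.zpowers γu = ⊤ := by
      rw [Subgroup.eq_top_iff']
      intro x
      obtain ⟨k, hk⟩ := hγ (x : F) (Units.ne_zero x)
      have hxk : x = γu ^ k := Units.ext (by rw [hk, Units.val_pow_eq_pow_val, hγu, Units.val_mk0])
      rw [hxk]
      exact Subgroup.npow_mem_zpowers γu k
    have h2 := Nat.card_zpowers γu
    rw [h1] at h2
    rw [← h2, Nat.card_congr Subgroup.topEquiv.toEquiv, Nat.card_eq_fintype_card,
      Fintype.card_units, hq]
  have horda2 : orderOf a2u = d2 := by
    rw [ha2u, orderOf_pow, hordγ, Nat.gcd_eq_right (Nat.div_dvd_of_dvd hd2),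
      Nat.div_div_self hd2 (by omega)]
  -- p(d2) = m = p ^ k
  obtain ⟨n, -, hn⟩ := FiniteField.card F p
  rw [hq] at hn
  set m := pPow p d2 with hm
  have hSq : q ∈ {m | (∃ k, 1 ≤ k ∧ m = p ^ k) ∧ m % d2 = 1 % d2} := by
    refine ⟨⟨n, n.2, hn⟩, ?_⟩
    obtain ⟨s, hs⟩ := hd2
    have hq' : q = 1 + d2 * s := by omega
    rw [hq', Nat.add_mul_mod_self_left]
  have hmmem := Nat.sInf_mem (⟨q, hSq⟩ : {m | (∃ k, 1 ≤ k ∧ m = p ^ k) ∧ m % d2 = 1 % d2}.Nonempty)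
  rw [show sInf {m | (∃ k, 1 ≤ k ∧ m = p ^ k) ∧ m % d2 = 1 % d2} = m from rfl] at hmmem
  obtain ⟨⟨k, hk1, hmpk⟩, hmmod⟩ := hmmem
  have hp2 : 2 ≤ p := hp.two_le
  have hm2 : 2 ≤ m := by
    rw [hmpk]
    calc 2 ≤ p := hp2
    _ = p ^ 1 := (pow_one p).symm
    _ ≤ p ^ k := Nat.pow_le_pow_right (by omega) hk1
  have hd2m : d2 ∣ m - 1 := by
    have : 1 ≡ m [MOD d2] := (hmmod).symm
    exact (Nat.modEq_iff_dvd' (by omega)).1 this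
  -- a2 ^ (m - 1) = 1
  have ha2m1 : a2 ^ (m - 1) = 1 := by
    obtain ⟨w, hw⟩ := hd2m
    have : a2u ^ (m - 1) = 1 := by
      rw [hw, pow_mul, ← horda2, pow_orderOf_eq_one, one_pow]
    calc a2 ^ (m - 1) = ((a2u ^ (m - 1) : Fˣ) : F) := by
          rw [Units.val_pow_eq_pow_val, ha2uv]
    _ = 1 := by rw [this, Units.val_one]
  -- the subring generated by a2 and the fixed field of Frobenius^k
  set C : Subring F := Subring.closure {a2} with hC
  set E : Subfield F := fixedSubfield F p k (by omega) with hE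
  have ha2E : a2 ∈ E := by
    show a2 ^ p ^ k = a2
    rw [← hmpk, show m = (m - 1) + 1 by omega, pow_succ, ha2m1, one_mul]
  have hCE : C ≤ E.toSubring := (Subring.closure_le).2 (by
    intro x hx
    rw [Set.mem_singleton_iff] at hx
    subst hx
    exact ha2E)
  -- cardinalities
  have hEcard : (E : Set F).ncard ≤ m := by
    set P : Polynomial F := Polynomial.X ^ m - Polynomial.X with hP
    have hPc : P.coeff m = 1 := by
      rw [hP, Polynomial.coeff_sub, Polynomial.coeff_X_pow, if_pos rfl,
        Polynomial.coeff_X, if_neg (by omega)]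
      ring
    have hPne : P ≠ 0 := fun h => by simp [h] at hPc
    have hdeg : P.natDegree ≤ m := by
      refine le_trans (Polynomial.natDegree_sub_le _ _) ?_
      simp only [Polynomial.natDegree_X_pow, Polynomial.natDegree_X]
      omega
    have hsub : (E : Set F) ⊆ ↑P.roots.toFinset := by
      intro x hx
      have hx' : x ^ p ^ k = x := hx
      simp only [Finset.coe_sort_coe, Multiset.mem_toFinset, Finset.mem_coe]
      rw [Polynomial.mem_roots hPne]
      show Polynomial.eval x P = 0
      rw [hP]
      simp only [Polynomial.eval_sub, Polynomial.eval_pow, Polynomial.eval_X]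
      rw [hmpk, hx', sub_self]
    calc (E : Set F).ncard ≤ (↑P.roots.toFinset : Set F).ncard :=
          Set.ncard_le_ncard hsub (Finset.finite_toSet _)
    _ = P.roots.toFinset.card := Set.ncard_coe_finset _
    _ ≤ Multiset.card P.roots := Multiset.toFinset_card_le _
    _ ≤ P.natDegree := Polynomial.card_roots' P
    _ ≤ m := hdeg
  have hCcard : m ≤ (C : Set F).ncard := by
    haveI : Fintype ↥C := Fintype.ofFinite _
    letI : Field ↥C := Fintype.fieldOfDomain _
    obtain ⟨j, -, hj⟩ := FiniteField.card ↥C p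
    have ha2C : a2 ∈ C := Subring.subset_closure rfl
    have ha2Cne : (⟨a2, ha2C⟩ : ↥C) ≠ 0 := by
      intro h
      exact ha2ne (congrArg Subtype.val h)
    have hpow := FiniteField.pow_card_sub_one_eq_one (⟨a2, ha2C⟩ : ↥C) ha2Cne
    have hpowF : a2 ^ (Fintype.card ↥C - 1) = 1 := by
      have := congrArg Subtype.val hpow
      push_cast at this
      exact this
    have hdvd : d2 ∣ Fintype.card ↥C - 1 := by
      rw [← horda2]
      apply orderOf_dvd_of_pow_eq_one
      apply Units.ext
      rw [Units.val_pow_eq_pow_val, ha2uv, hpowF, Units.val_one]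
    have hcard2 : 2 ≤ Fintype.card ↥C := Fintype.one_lt_card
    have hj1 : 1 ≤ (j : ℕ) := j.2
    have hmem : Fintype.card ↥C ∈ {m | (∃ k, 1 ≤ k ∧ m = p ^ k) ∧ m % d2 = 1 % d2} := by
      refine ⟨⟨j, hj1, hj⟩, ?_⟩
      obtain ⟨s, hs⟩ := hdvd
      have : Fintype.card ↥C = 1 + d2 * s := by omega
      rw [this, Nat.add_mul_mod_self_left]
    have hle := Nat.sInf_le hmem
    rw [show sInf {m | (∃ k, 1 ≤ k ∧ m = p ^ k) ∧ m % d2 = 1 % d2} = m from rfl] at hle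
    have hcc : (C : Set F).ncard = Fintype.card ↥C := by
      rw [← Nat.card_coe_set_eq, Nat.card_eq_fintype_card]
      congr 1
    omega
  have hCEeq : (C : Set F) = (E : Set F) := by
    apply Set.eq_of_subset_of_ncard_le hCE (hEcard.trans hCcard) (Set.toFinite _)
  -- K0 is contained in C
  have hKC : ∀ x ∈ K0, x ∈ C := by
    intro x hx
    haveI : Fintype ↥K0 := Fintype.ofFinite _
    have hcardK : Fintype.card ↥K0 = m := by
      rw [← Nat.card_eq_fintype_card, hK0card]
    have hpow := FiniteField.pow_card (⟨x, hx⟩ : ↥K0)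
    rw [hcardK] at hpow
    have hxF : x ^ m = x := by
      have := congrArg Subtype.val hpow
      push_cast at this
      exact this
    have hxE : x ∈ (E : Set F) := by
      show x ^ p ^ k = x
      rw [← hmpk]
      exact hxF
    exact (hCEeq.symm ▸ hxE : x ∈ (C : Set F))
  -- relation between a1 and a2
  have ha1m : a1 = a2 ^ (d2 / d1) := by
    rw [ha1, ha2, ← pow_mul]
    congr 1
    obtain ⟨e, he⟩ := hd12
    obtain ⟨s, hs⟩ := hd2
    have h1 : (q - 1) / d1 = e * s := by
      rw [hs, he, mul_assoc, Nat.mul_div_cancel_left _ hd1pos]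
    have h2 : (q - 1) / d2 = s := by
      rw [hs, Nat.mul_div_cancel_left _ hd2pos]
    have h3 : d2 / d1 = e := by
      rw [he, Nat.mul_div_cancel_left _ hd1pos]
    rw [h1, h2, h3, mul_comm]
  set S1 : Subgroup (GL2 F) := Sgrp a1 0 H1 with hS1d
  set S2 : Subgroup (GL2 F) := Sgrp a2 0 H2 with hS2d
  have hS2AGL : S2 ≤ AGL F := Sgrp_le_AGL a2 0 H2
  have hS1S2 : S1 ≤ S2 := by
    rw [hS1d, Sgrp, Subgroup.closure_le]
    rintro g (hg | ⟨h, hh, hg⟩)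
    · have hgd : g = dmat (a2u ^ (d2 / d1)) := by
        apply Units.ext
        rw [hg, dmat_val, Units.val_pow_eq_pow_val, ha2uv, ← ha1m]
      rw [hgd, ← dmat_pow]
      exact Subgroup.pow_mem _ (dmat_mem_Sgrp a2u ha2uv H2) _
    · have hgu : g = umat h := Units.ext (by rw [hg, umat_val])
      rw [hgu]
      exact umat_mem_Sgrp (hH12 hh)
  -- the distinguished element t = umat (x0 * h0)
  have hx0f : x0 ∈ Subfield.closure {a2} := by
    have hCf : C ≤ (Subfield.closure {a2}).toSubring := Subring.closure_le.2 (by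
      intro y hy
      rw [Set.mem_singleton_iff] at hy
      subst hy
      exact Subfield.subset_closure (Set.mem_singleton a2))
    exact hCf (hKC x0 hx0K)
  have hth2 : x0 * h0 ∈ H2 := hS2.2.2 x0 hx0f h0 (hH12 hh0)
  have htL : umat (x0 * h0) ∈ S2 := umat_mem_Sgrp hth2
  have htK : umat (x0 * h0) ∉ S1 := by
    intro ht
    apply hx0h0
    refine mem_H_of_umat_mem_Sgrp (q - 1) hq1pos ?_ ?_ ht
    · have h := FiniteField.pow_card_sub_one_eq_one a1 ha1ne
      rwa [hq] at h
    · intro j h hh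
      have ha1c : a1 ∈ Subfield.closure {a1} := Subfield.subset_closure (Set.mem_singleton a1)
      exact hS1.2.2 (a1 ^ j) (pow_mem ha1c j) h hh
  -- the fiber condition
  have hfib : ∀ M : Subgroup (GL2 F), S1 ≤ M → M ≤ S2 →
      Subgroup.closure (↑M ∪ {umat (x0 * h0)}) = S2 → M = S2 := by
    intro M hS1M hMS2 hcM
    have hMA : M ≤ AGL F := hMS2.trans hS2AGL
    have hWA : S2 ≤ WA M hMA := by
      rw [← hcM, Subgroup.closure_le]
      rintro g (hg | hg)
      · exact ⟨hMA hg, g, hg, rfl⟩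
      · simp only [Set.mem_singleton_iff] at hg
        subst hg
        refine ⟨umat_mem_AGL _, 1, M.one_mem, ?_⟩
        simp [Matrix.one_apply]
    obtain ⟨-, m0, hm0M, hm000⟩ := hWA (dmat_mem_Sgrp a2u ha2uv H2)
    have hm000' : (m0 : Matrix (Fin 2) (Fin 2) F) 0 0 = a2 := by
      rw [hm000, dmat_val]
      simp [ha2uv]
    have ha2R : a2 ∈ Rof (Hof M) := by
      show ∀ h ∈ Hof M, a2 * h ∈ Hof M
      intro h hh
      have hh' : umat h ∈ M := hh
      have hc := M.mul_mem (M.mul_mem hm0M hh') (M.inv_mem hm0M)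
      rw [conj_umat (hMA hm0M) h, hm000'] at hc
      exact hc
    have hCR : C ≤ Rof (Hof M) := Subring.closure_le.2 (by
      intro y hy
      rw [Set.mem_singleton_iff] at hy
      subst hy
      exact ha2R)
    have hh0M : h0 ∈ Hof M := hS1M (umat_mem_Sgrp hh0)
    have hx0R : x0 ∈ Rof (Hof M) := hCR (hKC x0 hx0K)
    have htM : umat (x0 * h0) ∈ M := hx0R h0 hh0M
    apply le_antisymm hMS2
    rw [← hcM, Subgroup.closure_le]
    rintro g (hg | hg)
    · exact hg
    · simp only [Set.mem_singleton_iff] at hg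
      subst hg
      exact htM
  haveI : Finite (Subgroup (GL2 F)) :=
    Finite.of_injective (fun S => (S : Set (GL2 F))) SetLike.coe_injective
  exact mu_eq_zero μ hμ S1 S2 hS1S2 (umat (x0 * h0)) htL htK hfib
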